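/- (Lemma 2, weighted plausibility is stochastically larger than uniform.) Let Y be a measurable space, Θ an index set, and (P_θ)_{θ∈Θ} a family of probability measures on Y. Let w : Y → ℝ be a measurable function (a test statistic free of θ), and for each θ define F_θ(t) = P_θ({y : w(y) ≤ t}). For a nonempty subset A ⊆ Θ define the weighted plausibility pl^w(y) = sup_{θ'∈A} F_{θ'}(w(y)). Then for every θ ∈ A and every α ∈ [0, 1], the P_θ-outer measure of the set {y ∈ Y : pl^w(y) ≤ α} is at most α. -/

import Mathlib

open MeasureTheory Set

/-- Weighted plausibility is stochastically larger than uniform: for a family of probability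
measures `P θ`, a statistic `w` free of `θ` with distribution functions
`F θ t = P θ {y | w y ≤ t}`, and the weighted plausibility
`pl y = ⨆ θ' ∈ A, F θ' (w y)`, we have, for every `θ ∈ A` and `α ∈ [0,1]`,
`P θ {y | pl y ≤ α} ≤ α` (outer measure of the sublevel set). -/
theorem weighted_plausibility_stochastically_larger_than_uniform
    {Y : Type*} [MeasurableSpace Y] {Θ : Type*}
    (P : Θ → Measure Y) (hP : ∀ θ, IsProbabilityMeasure (P θ))
    (w : Y → ℝ) (hw : Measurable w)
    (F : Θ → ℝ → ENNReal) (hF : ∀ θ t, F θ t = P θ {y | w y ≤ t})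
    (A : Set Θ) (hA : A.Nonempty)
    (pl : Y → ENNReal) (hpl : ∀ y, pl y = ⨆ θ' ∈ A, F θ' (w y))
    (θ : Θ) (hθ : θ ∈ A) (α : ENNReal) (hα : α ≤ 1) :
    P θ {y : Y | pl y ≤ α} ≤ α := by
  have hprob := hP θ
  have hmono : Monotone (F θ) := fun a b hab => by
    rw [hF, hF]; exact measure_mono fun y hy => le_trans hy hab
  have hsub : {y | pl y ≤ α} ⊆ {y | F θ (w y) ≤ α} := by
    intro y hy
    simp only [Set.mem_setOf_eq, hpl] at hy ⊢
    exact le_trans (le_biSup (fun θ' => F θ' (w y)) hθ) hy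
  refine le_trans (measure_mono hsub) ?_
  rcases eq_or_lt_of_le hα with h1 | h1
  · exact h1 ▸ prob_le_one
  set s : Set ℝ := {t | F θ t ≤ α} with hs
  have hdown : ∀ a b : ℝ, a ≤ b → b ∈ s → a ∈ s := fun a b hab hb =>
    le_trans (hmono hab) hb
  rcases Set.eq_empty_or_nonempty s with hse | hsne
  · have hempty : {y | F θ (w y) ≤ α} = ∅ := by
      ext y
      simp only [Set.mem_setOf_eq, Set.mem_empty_iff_false, iff_false]
      intro hy
      exact Set.eq_empty_iff_forall_notMem.mp hse (w y) hy
    rw [hempty]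
    simp
  -- s is bounded above
  have hsup1 : (⨆ n : ℕ, F θ (n : ℝ)) = 1 := by
    have hd : Directed (· ⊆ ·) (fun n : ℕ => {y | w y ≤ (n : ℝ)}) := by
      apply Monotone.directed_le
      intro a b hab y hy
      simp only [Set.mem_setOf_eq] at hy ⊢
      exact le_trans hy (by exact_mod_cast hab)
    have := Directed.measure_iUnion (μ := P θ) hd
    have hU : (⋃ n : ℕ, {y | w y ≤ (n : ℝ)}) = Set.univ := by
      ext y
      simp only [Set.mem_iUnion, Set.mem_setOf_eq, Set.mem_univ, iff_true]
      exact exists_nat_ge (w y)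
    rw [hU] at this
    simp only [measure_univ] at this
    simp only [hF]
    exact this.symm
  have hex : ∃ n : ℕ, α < F θ (n : ℝ) := by
    have : α < ⨆ n : ℕ, F θ (n : ℝ) := hsup1 ▸ h1
    exact lt_iSup_iff.mp this
  obtain ⟨n, hn⟩ := hex
  have hbdd : BddAbove s := by
    refine ⟨(n : ℝ), fun t ht => ?_⟩
    by_contra hlt
    push_neg at hlt
    exact absurd (le_trans (hmono hlt.le) ht) (not_le.mpr hn)
  set c := sSup s with hc
  by_cases hcs : c ∈ s
  · have : {y | F θ (w y) ≤ α} ⊆ {y | w y ≤ c} := fun y hy =>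
      le_csSup hbdd hy
    refine le_trans (measure_mono this) ?_
    rw [← hF]
    exact hcs
  · have hiff : {y | F θ (w y) ≤ α} ⊆ {y | w y < c} := by
      intro y hy
      have h1' : w y ≤ c := le_csSup hbdd hy
      rcases lt_or_eq_of_le h1' with h | h
      · exact h
      · exact absurd (h ▸ hy) hcs
    have hIio : ∀ t : ℝ, t < c → t ∈ s := by
      intro t ht
      obtain ⟨u, hu, htu⟩ := exists_lt_of_lt_csSup hsne ht
      exact hdown t u htu.le hu
    have hUeq : {y | w y < c} = ⋃ k : ℕ, {y | w y ≤ c - 1 / (k + 1)} := by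
      ext y
      simp only [Set.mem_iUnion, Set.mem_setOf_eq]
      constructor
      · intro hy
        obtain ⟨k, hk⟩ := exists_nat_one_div_lt (sub_pos.mpr hy)
        exact ⟨k, by linarith⟩
      · rintro ⟨k, hk⟩
        have : (0 : ℝ) < 1 / (k + 1) := by positivity
        linarith
    have hd : Directed (· ⊆ ·) (fun k : ℕ => {y : Y | w y ≤ c - 1 / (k + 1)}) := by
      apply Monotone.directed_le
      intro a b hab y hy
      have hab' : (1 : ℝ) / (b + 1) ≤ 1 / (a + 1) := by
        apply one_div_le_one_div_of_le
        · positivity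
        · exact_mod_cast add_le_add_left (Nat.cast_le.mpr hab) 1
      simp only [Set.mem_setOf_eq] at hy ⊢
      linarith
    refine le_trans (measure_mono hiff) ?_
    rw [hUeq, hd.measure_iUnion]
    refine iSup_le fun k => ?_
    have hk : c - 1 / (k + 1) ∈ s := by
      apply hIio
      have : (0 : ℝ) < 1 / (k + 1) := by positivity
      linarith
    calc P θ {y | w y ≤ c - 1 / (k + 1)} = F θ (c - 1 / (k + 1)) := (hF θ _).symm
      _ ≤ α := hk
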